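/- Let n ≥ 1 and N ≥ 0 be integers and let P ∈ ℚ[x₁, …, xₙ] be a polynomial. Write P(1−y₁, …, 1−yₙ) = Σ_b c_b y₁^{b₁} ⋯ yₙ^{bₙ} as a finite sum over multi-indices b = (b₁, …, bₙ) of non-negative integers with coefficients c_b ∈ ℚ. If the function (x₁, …, xₙ) ↦ P(x₁, …, xₙ)/(1 − x₁⋯xₙ)^N is Lebesgue-integrable on the open unit cube (0,1)ⁿ, then every multi-index b with c_b ≠ 0 satisfies b₁ + ⋯ + bₙ ≥ N + 1 − n. -/

import Mathlib

open MeasureTheory MvPolynomial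
open scoped ENNReal NNReal

/-- The open unit cube `(0,1)^n` in `ℝ^n`. -/
def unitCube (n : ℕ) : Set (Fin n → ℝ) := Set.univ.pi fun _ => Set.Ioo (0 : ℝ) 1

/-- A nonzero real multivariate polynomial is nonzero somewhere on the open box (1/4, 3/4)^n. -/
lemma exists_box_eval_ne_zero {n : ℕ} (p : MvPolynomial (Fin n) ℝ) (hp : p ≠ 0) :
    ∃ z : Fin n → ℝ, (∀ i, z i ∈ Set.Ioo (1/4 : ℝ) (3/4)) ∧ MvPolynomial.eval z p ≠ 0 := by
  by_contra h
  push_neg at h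
  apply hp
  apply MvPolynomial.funext (q := 0)
  intro x
  have hf : AnalyticOnNhd ℝ (fun z => MvPolynomial.eval z p) Set.univ :=
    AnalyticOnNhd.eval_mvPolynomial p
  have hU : IsOpen (Set.univ.pi fun _ : Fin n => Set.Ioo (1/4 : ℝ) (3/4)) :=
    isOpen_set_pi Set.finite_univ (fun _ _ => isOpen_Ioo)
  have hz₀ : (fun _ : Fin n => (1/2 : ℝ)) ∈ (Set.univ.pi fun _ : Fin n => Set.Ioo (1/4 : ℝ) (3/4)) := by
    intro i _
    constructor <;> norm_num
  have hev : (fun z => MvPolynomial.eval z p) =ᶠ[nhds (fun _ : Fin n => (1/2 : ℝ))] 0 := by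
    filter_upwards [hU.mem_nhds hz₀] with z hz
    exact h z (fun i => hz i (Set.mem_univ i))
  have := hf.eqOn_zero_of_preconnected_of_eventuallyEq_zero isPreconnected_univ
    (Set.mem_univ _) hev
  simpa using this (Set.mem_univ x)

lemma one_sub_sum_le_prod' {n : ℕ} (y : Fin n → ℝ) (h0 : ∀ i, 0 ≤ y i) (h1 : ∀ i, y i ≤ 1) :
    1 - ∑ i, y i ≤ ∏ i, (1 - y i) := by
  classical
  have key : ∀ s : Finset (Fin n), 1 - ∑ i ∈ s, y i ≤ ∏ i ∈ s, (1 - y i) := by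
    intro s
    induction s using Finset.cons_induction with
    | empty => simp
    | cons a s ha ih =>
      rw [Finset.prod_cons, Finset.sum_cons]
      have hsum : 0 ≤ ∑ i ∈ s, y i := Finset.sum_nonneg fun i _ => h0 i
      have h1a : 0 ≤ 1 - y a := by linarith [h1 a]
      nlinarith [h0 a]
  exact key Finset.univ


set_option maxHeartbeats 1000000 in
theorem stmt1 (n N : ℕ) (hn : 1 ≤ n) (P : MvPolynomial (Fin n) ℚ)
    (hint : IntegrableOn
      (fun x : Fin n → ℝ => MvPolynomial.aeval x P / (1 - ∏ i, x i) ^ N)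
      (unitCube n)) :
    ∀ b : Fin n →₀ ℕ,
      MvPolynomial.coeff b
        (MvPolynomial.aeval
          (fun i : Fin n => (1 - MvPolynomial.X i : MvPolynomial (Fin n) ℚ)) P) ≠ 0 →
      N + 1 ≤ (∑ i, b i) + n := by
  classical
  intro b hb
  by_contra hlt
  push_neg at hlt
  have hbN : (∑ i, b i) + n ≤ N := by omega
  set Q : MvPolynomial (Fin n) ℚ :=
    MvPolynomial.aeval (fun i : Fin n => (1 - MvPolynomial.X i : MvPolynomial (Fin n) ℚ)) P with hQ
  set QR : MvPolynomial (Fin n) ℝ := MvPolynomial.map (algebraMap ℚ ℝ) Q with hQR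
  have hcoeffb : MvPolynomial.coeff b QR ≠ 0 := by
    rw [hQR, MvPolynomial.coeff_map]
    simpa using hb
  have hbs : b ∈ QR.support := MvPolynomial.mem_support_iff.mpr hcoeffb
  -- main evaluation identity
  have hPQ : ∀ x : Fin n → ℝ, (MvPolynomial.aeval x P : ℝ)
      = MvPolynomial.eval (fun i => 1 - x i) QR := by
    intro x
    have h1 : MvPolynomial.eval (fun i => 1 - x i) QR
        = MvPolynomial.aeval (fun i => 1 - x i) Q := by
      rw [hQR, MvPolynomial.eval_map, MvPolynomial.aeval_def]
    have h2 : MvPolynomial.aeval (fun i => 1 - x i) Q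
        = MvPolynomial.aeval
            (fun i => MvPolynomial.aeval (fun j => 1 - x j)
              (1 - MvPolynomial.X i : MvPolynomial (Fin n) ℚ)) P := by
      rw [hQ]
      have hc := MvPolynomial.comp_aeval
        (f := fun i : Fin n => (1 - MvPolynomial.X i : MvPolynomial (Fin n) ℚ))
        (φ := MvPolynomial.aeval (R := ℚ) (fun i : Fin n => 1 - x i))
      have := DFunLike.congr_fun hc P
      rwa [AlgHom.comp_apply] at this
    rw [h1, h2]
    have : (fun i : Fin n => MvPolynomial.aeval (fun j : Fin n => 1 - x j)
        (1 - MvPolynomial.X i : MvPolynomial (Fin n) ℚ)) = x := by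
      funext i; simp
    rw [this]
  -- minimal total degree
  set deg : (Fin n →₀ ℕ) → ℕ := fun m => ∑ i, m i with hdeg
  have hsne : (QR.support.image deg).Nonempty := ⟨deg b, Finset.mem_image_of_mem deg hbs⟩
  set D : ℕ := (QR.support.image deg).min' hsne with hD
  have hmin : ∀ m ∈ QR.support, D ≤ deg m := fun m hm =>
    Finset.min'_le _ _ (Finset.mem_image_of_mem deg hm)
  have hDb : D ≤ ∑ i, b i := hmin b hbs
  have hDN : D + n ≤ N := by omega
  obtain ⟨m0, hm0s, hm0d⟩ : ∃ m0 ∈ QR.support, deg m0 = D := by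
    have := (QR.support.image deg).min'_mem hsne
    rw [← hD] at this
    simpa [eq_comm] using Finset.mem_image.mp this
  -- the blown-up polynomial function
  set φ : ℝ × (Fin n → ℝ) → ℝ := fun p =>
    ∑ m ∈ QR.support, MvPolynomial.coeff m QR * p.1 ^ (deg m - D) * ∏ i, p.2 i ^ m i with hφ
  have hφcont : Continuous φ := by
    apply continuous_finset_sum
    intro m _
    exact ((continuous_const.mul (continuous_fst.pow _)).mul
      (continuous_finset_prod _ fun i _ => ((continuous_apply i).comp continuous_snd).pow _))
  have hkey : ∀ (t : ℝ) (z : Fin n → ℝ),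
      MvPolynomial.eval (fun i => t * z i) QR = t ^ D * φ (t, z) := by
    intro t z
    rw [MvPolynomial.eval_eq']
    rw [hφ, Finset.mul_sum]
    apply Finset.sum_congr rfl
    intro m hm
    have h1 : ∏ i, (t * z i) ^ m i = t ^ deg m * ∏ i, z i ^ m i := by
      rw [hdeg, ← Finset.prod_pow_eq_pow_sum, ← Finset.prod_mul_distrib]
      exact Finset.prod_congr rfl fun i _ => (mul_pow _ _ _)
    have h2 : t ^ deg m = t ^ D * t ^ (deg m - D) := by
      rw [← pow_add]
      congr 1
      have := hmin m hm
      omega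
    rw [h1, h2]
    dsimp only
    ring
  -- the homogeneous lowest part
  set H : MvPolynomial (Fin n) ℝ :=
    ∑ m ∈ QR.support.filter (fun m => deg m = D),
      MvPolynomial.monomial m (MvPolynomial.coeff m QR) with hH
  have hφ0 : ∀ z : Fin n → ℝ, φ (0, z) = MvPolynomial.eval z H := by
    intro z
    rw [hH, hφ]
    rw [map_sum]
    rw [Finset.sum_filter]
    apply Finset.sum_congr rfl
    intro m hm
    by_cases hdm : deg m = D
    · rw [if_pos hdm, hdm, Nat.sub_self, pow_zero, MvPolynomial.eval_monomial, mul_one]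
      congr 1
      exact (Finsupp.prod_fintype _ _ (fun i => pow_zero _)).symm
    · rw [if_neg hdm]
      have : deg m - D ≠ 0 := by have := hmin m hm; omega
      rw [zero_pow this]
      ring
  have hHne : H ≠ 0 := by
    intro h0
    have hcH : MvPolynomial.coeff m0 H = MvPolynomial.coeff m0 QR := by
      rw [hH]
      rw [MvPolynomial.coeff_sum]
      rw [Finset.sum_eq_single m0]
      · rw [MvPolynomial.coeff_monomial, if_pos rfl]
      · intro m hm hne
        rw [MvPolynomial.coeff_monomial, if_neg hne]
      · intro hnm
        exact absurd (Finset.mem_filter.mpr ⟨hm0s, hm0d⟩) hnm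
    rw [h0] at hcH
    exact MvPolynomial.mem_support_iff.mp hm0s (by simpa using hcH.symm)
  obtain ⟨z₀, hz₀mem, hz₀ne⟩ := exists_box_eval_ne_zero H hHne
  set c0 : ℝ := |MvPolynomial.eval z₀ H| with hc0def
  have hc0 : 0 < c0 := abs_pos.mpr hz₀ne
  have hφz₀ : φ (0, z₀) = MvPolynomial.eval z₀ H := hφ0 z₀
  -- continuity neighborhood
  obtain ⟨δ, hδpos, hδ⟩ := Metric.continuousAt_iff.mp (hφcont.continuousAt (x := (0, z₀)))
    (c0/2) (by positivity)
  set δ' : ℝ := min (δ/2) (1/8) with hδ'def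
  have hδ'pos : 0 < δ' := lt_min (by linarith) (by norm_num)
  have hδ'δ : δ' < δ := lt_of_le_of_lt (min_le_left _ _) (by linarith)
  have hδ'8 : δ' ≤ 1/8 := min_le_right _ _
  set aa : Fin n → ℝ := fun i => z₀ i - δ' with haadef
  set bb : Fin n → ℝ := fun i => z₀ i + δ' with hbbdef
  have haapos : ∀ i, 0 < aa i := by
    intro i
    have := (hz₀mem i).1
    simp only [haadef]
    linarith
  have hbblt : ∀ i, bb i < 1 := by
    intro i
    have := (hz₀mem i).2
    simp only [hbbdef]
    linarith
  have haabb : ∀ i, aa i < bb i := by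
    intro i; simp only [haadef, hbbdef]; linarith
  set i0 : Fin n := ⟨0, hn⟩ with hi0
  set r : ℝ := aa i0 / bb i0 with hrdef
  have hr0 : 0 < r := div_pos (haapos i0) ((haapos i0).trans (haabb i0))
  have hr1 : r < 1 := (div_lt_one ((haapos i0).trans (haabb i0))).mpr (haabb i0)
  set t : ℕ → ℝ := fun k => δ' * r ^ (k + 1) with htdef
  have ht0 : ∀ k, 0 < t k := fun k => mul_pos hδ'pos (pow_pos hr0 _)
  have htδ' : ∀ k, t k < δ' := by
    intro k
    have : r ^ (k+1) < 1 := pow_lt_one₀ hr0.le hr1 (Nat.succ_ne_zero k)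
    calc t k = δ' * r ^ (k+1) := rfl
      _ < δ' * 1 := by exact mul_lt_mul_of_pos_left this hδ'pos
      _ = δ' := mul_one _
  have ht1 : ∀ k, t k < 1 := fun k => lt_of_lt_of_le (lt_of_lt_of_le (htδ' k) hδ'8) (by norm_num)
  have htmono : ∀ k l, k < l → t l ≤ t k * r := by
    intro k l hkl
    have hp : r ^ (l+1) ≤ r ^ (k+2) :=
      pow_le_pow_of_le_one hr0.le hr1.le (by omega)
    calc t l = δ' * r ^ (l+1) := rfl
      _ ≤ δ' * r ^ (k+2) := by exact mul_le_mul_of_nonneg_left hp hδ'pos.le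
      _ = δ' * r ^ (k+1) * r := by ring
      _ = t k * r := rfl
  set S : ℕ → Set (Fin n → ℝ) :=
    fun k => Set.univ.pi fun i => Set.Ioo (1 - t k * bb i) (1 - t k * aa i) with hSdef
  have hSm : ∀ k, MeasurableSet (S k) :=
    fun k => MeasurableSet.univ_pi fun i => measurableSet_Ioo
  have hSval : ∀ k x, x ∈ S k ↔ ∀ i, 1 - t k * bb i < x i ∧ x i < 1 - t k * aa i := by
    intro k x
    constructor
    · intro hx i; exact hx i (Set.mem_univ i)
    · intro hx i _; exact hx i
  have hScube : ∀ k, S k ⊆ unitCube n := by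
    intro k x hx i _
    obtain ⟨h1, h2⟩ := (hSval k x).mp hx i
    constructor
    · have : t k * bb i < 1 :=
        lt_of_lt_of_le (mul_lt_mul_of_pos_left (hbblt i) (ht0 k)) (by nlinarith [ht1 k, ht0 k])
      linarith
    · have : 0 < t k * aa i := mul_pos (ht0 k) (haapos i)
      linarith
  have hkey2 : ∀ k l, k < l → ∀ x, x ∈ S k → x ∉ S l := by
    intro k l hkl x hxk hxl
    obtain ⟨h1, h2⟩ := (hSval k x).mp hxk i0
    obtain ⟨h3, h4⟩ := (hSval l x).mp hxl i0
    have hbb0 : 0 < bb i0 := (haapos i0).trans (haabb i0)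
    have : t l * bb i0 ≤ t k * aa i0 := by
      calc t l * bb i0 ≤ (t k * r) * bb i0 :=
            mul_le_mul_of_nonneg_right (htmono k l hkl) hbb0.le
        _ = t k * aa i0 := by
            rw [hrdef]; field_simp
    linarith
  have hdisj : Pairwise (Function.onFun Disjoint S) := by
    intro k l hkl
    rcases lt_or_gt_of_ne hkl with h | h
    · exact Set.disjoint_left.mpr (fun x hx hx' => hkey2 k l h x hx hx')
    · exact Set.disjoint_right.mpr (fun x hx hx' => hkey2 l k h x hx hx')
  -- pointwise lower bound
  have hpt : ∀ k, ∀ x ∈ S k,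
      c0/2 * t k ^ D / ((n : ℝ) * t k) ^ N
        ≤ ‖MvPolynomial.aeval x P / (1 - ∏ i, x i) ^ N‖ := by
    intro k x hx
    set y : Fin n → ℝ := fun i => 1 - x i with hydef
    set z : Fin n → ℝ := fun i => y i / t k with hzdef
    have hy : ∀ i, t k * aa i < y i ∧ y i < t k * bb i := by
      intro i
      obtain ⟨h1, h2⟩ := (hSval k x).mp hx i
      constructor <;> (simp only [hydef]; linarith)
    have hz : ∀ i, aa i < z i ∧ z i < bb i := by
      intro i
      obtain ⟨h1, h2⟩ := hy i
      constructor
      · rw [hzdef, lt_div_iff₀ (ht0 k)]; linarith [h1]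
      · rw [hzdef, div_lt_iff₀ (ht0 k)]; linarith [h2]
    have hxio : ∀ i, 0 < x i ∧ x i < 1 := by
      intro i
      have := hScube k hx i (Set.mem_univ i)
      exact ⟨this.1, this.2⟩
    have hy01 : ∀ i, 0 ≤ y i ∧ y i ≤ 1 := by
      intro i
      obtain ⟨h1, h2⟩ := hxio i
      constructor <;> (simp only [hydef]; linarith)
    -- distance estimate
    have hdist : dist ((t k, z) : ℝ × (Fin n → ℝ)) ((0 : ℝ), z₀) < δ := by
      rw [Prod.dist_eq]
      apply max_lt
      · rw [Real.dist_eq, sub_zero, abs_of_pos (ht0 k)]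
        linarith [htδ' k]
      · rw [dist_pi_lt_iff hδpos]
        intro i
        rw [Real.dist_eq, abs_lt]
        obtain ⟨h1, h2⟩ := hz i
        constructor
        · simp only [haadef] at h1; linarith
        · simp only [hbbdef] at h2; linarith
    have hφb : c0/2 ≤ |φ (t k, z)| := by
      have h1 := hδ hdist
      rw [Real.dist_eq] at h1
      have h2 : |φ (0, z₀)| = c0 := by rw [hφz₀, hc0def]
      have h3 := abs_sub_abs_le_abs_sub (φ (0, z₀)) (φ (t k, z))
      rw [abs_sub_comm] at h3
      linarith
    have hyz : (fun i => (1 : ℝ) - x i) = fun i => t k * z i := by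
      funext i
      rw [hzdef]
      field_simp [hydef]
      rw [mul_div_cancel_left₀ _ (ht0 k).ne', hydef]
    have hnum : (MvPolynomial.aeval x P : ℝ) = t k ^ D * φ (t k, z) := by
      rw [hPQ x, hyz]
      exact hkey (t k) z
    have hnumlb : c0/2 * t k ^ D ≤ |MvPolynomial.aeval x P| := by
      rw [hnum, abs_mul, abs_of_pos (pow_pos (ht0 k) D)]
      calc c0/2 * t k ^ D = t k ^ D * (c0/2) := by ring
        _ ≤ t k ^ D * |φ (t k, z)| :=
            mul_le_mul_of_nonneg_left hφb (pow_pos (ht0 k) D).le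
    have hne : Nonempty (Fin n) := ⟨i0⟩
    have hprodlt : ∏ i, x i < 1 := by
      have := Finset.prod_lt_prod_of_nonempty (g := fun _ : Fin n => (1:ℝ))
        (fun i _ => (hxio i).1) (fun i _ => (hxio i).2) Finset.univ_nonempty
      simpa using this
    have hprodpos : 0 < ∏ i, x i := Finset.prod_pos (fun i _ => (hxio i).1)
    have hden0 : 0 < 1 - ∏ i, x i := by linarith
    have hxprod : ∏ i, x i = ∏ i, (1 - y i) := by
      apply Finset.prod_congr rfl
      intro i _
      simp [hydef]
    have hsumy : ∑ i, y i ≤ (n : ℝ) * t k := by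
      calc ∑ i, y i ≤ ∑ _i : Fin n, t k := by
            apply Finset.sum_le_sum
            intro i _
            have h2 := (hy i).2
            have : t k * bb i ≤ t k * 1 := mul_le_mul_of_nonneg_left (hbblt i).le (ht0 k).le
            linarith
        _ = (n : ℝ) * t k := by
            rw [Finset.sum_const, Finset.card_univ, Fintype.card_fin, nsmul_eq_mul]
    have hdenle : 1 - ∏ i, x i ≤ (n : ℝ) * t k := by
      have := one_sub_sum_le_prod' y (fun i => (hy01 i).1) (fun i => (hy01 i).2)
      rw [← hxprod] at this
      linarith
    have hdenpow : (1 - ∏ i, x i) ^ N ≤ ((n : ℝ) * t k) ^ N :=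
      pow_le_pow_left₀ hden0.le hdenle N
    have hdpos : 0 < (1 - ∏ i, x i) ^ N := pow_pos hden0 N
    rw [norm_div, Real.norm_eq_abs, Real.norm_eq_abs,
      abs_of_pos hdpos]
    exact div_le_div₀ (abs_nonneg _) hnumlb hdpos hdenpow
  -- the uniform lower bound on each piece
  have hnR : (0:ℝ) < (n:ℝ) := by exact_mod_cast hn
  set m : ℝ := c0/2 * (2*δ')^n / (n:ℝ)^N with hmdef
  have hm : 0 < m := div_pos (mul_pos (half_pos hc0)
    (pow_pos (by linarith : (0:ℝ) < 2*δ') n)) (pow_pos hnR N)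
  have hcontrib : ∀ k : ℕ, ENNReal.ofReal m
      ≤ ∫⁻ x in S k, (‖MvPolynomial.aeval x P / (1 - ∏ i, x i) ^ N‖₊ : ℝ≥0∞) := by
    intro k
    set T : ℝ := t k with hTdef
    have hT0 : 0 < T := ht0 k
    have hT1 : T < 1 := ht1 k
    set κ : ℝ := c0/2 * T ^ D / ((n : ℝ) * T) ^ N with hκdef
    have hκ0 : 0 < κ := div_pos (mul_pos (half_pos hc0) (pow_pos hT0 D))
      (pow_pos (mul_pos hnR hT0) N)
    have volSk : volume (S k) = (ENNReal.ofReal (T * (2*δ')))^n := by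
      have hlen : ∀ i, (1 - T * aa i) - (1 - T * bb i) = T * (2*δ') := by
        intro i
        simp only [haadef, hbbdef]
        ring
      calc volume (S k)
          = ∏ i : Fin n, volume (Set.Ioo (1 - t k * bb i) (1 - t k * aa i)) := by
            rw [hSdef]
            exact volume_pi_pi _
        _ = ∏ _i : Fin n, ENNReal.ofReal (T * (2*δ')) := by
            apply Finset.prod_congr rfl
            intro i _
            rw [Real.volume_Ioo, ← hTdef, hlen i]
        _ = (ENNReal.ofReal (T * (2*δ')))^n := by
            rw [Finset.prod_const, Finset.card_univ, Fintype.card_fin]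
    have hTNne : T ^ N ≠ 0 := (pow_pos hT0 N).ne'
    have hnNne : ((n:ℝ)) ^ N ≠ 0 := (pow_pos hnR N).ne'
    have e1 : κ * (T*(2*δ'))^n = m * (T^(D+n)/T^N) := by
      rw [hκdef, hmdef, mul_pow ((n:ℝ)) T N, mul_pow T (2*δ') n, pow_add]
      field_simp
    have e2 : (1:ℝ) ≤ T^(D+n)/T^N := by
      rw [le_div_iff₀ (pow_pos hT0 N), one_mul]
      exact pow_le_pow_of_le_one hT0.le hT1.le hDN
    have hreal : m ≤ κ * (T*(2*δ'))^n := by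
      rw [e1]
      exact le_mul_of_one_le_right hm.le e2
    calc ENNReal.ofReal m ≤ ENNReal.ofReal (κ * (T*(2*δ'))^n) :=
          ENNReal.ofReal_le_ofReal hreal
      _ = ENNReal.ofReal κ * (ENNReal.ofReal (T*(2*δ')))^n := by
          rw [ENNReal.ofReal_mul hκ0.le, ENNReal.ofReal_pow
            (mul_pos hT0 (by linarith : (0:ℝ) < 2*δ')).le]
      _ = ENNReal.ofReal κ * volume (S k) := by rw [volSk]
      _ = ∫⁻ _x in S k, ENNReal.ofReal κ := (setLIntegral_const (S k) _).symm
      _ ≤ ∫⁻ x in S k, (‖MvPolynomial.aeval x P / (1 - ∏ i, x i) ^ N‖₊ : ℝ≥0∞) := by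
          apply setLIntegral_mono' (hSm k)
          intro x hx
          rw [← enorm_eq_nnnorm, ← ofReal_norm_eq_enorm]
          exact ENNReal.ofReal_le_ofReal (hpt k x hx)
  have htop : (⊤ : ℝ≥0∞)
      ≤ ∫⁻ x in unitCube n, (‖MvPolynomial.aeval x P / (1 - ∏ i, x i) ^ N‖₊ : ℝ≥0∞) := by
    calc (⊤ : ℝ≥0∞) = ∑' _k : ℕ, ENNReal.ofReal m :=
          (ENNReal.tsum_const_eq_top_of_ne_zero (ENNReal.ofReal_pos.mpr hm).ne').symm
      _ ≤ ∑' k : ℕ, ∫⁻ x in S k, (‖MvPolynomial.aeval x P / (1 - ∏ i, x i) ^ N‖₊ : ℝ≥0∞) :=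
          ENNReal.tsum_le_tsum hcontrib
      _ = ∫⁻ x in ⋃ k, S k, (‖MvPolynomial.aeval x P / (1 - ∏ i, x i) ^ N‖₊ : ℝ≥0∞) :=
          (lintegral_iUnion hSm hdisj _).symm
      _ ≤ ∫⁻ x in unitCube n, (‖MvPolynomial.aeval x P / (1 - ∏ i, x i) ^ N‖₊ : ℝ≥0∞) :=
          lintegral_mono_set (Set.iUnion_subset hScube)
  have hfin := (hasFiniteIntegral_def _ _).mp hint.2
  exact absurd hfin (not_lt.mpr htop)
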